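/- arXiv:0708.2772 — 3 statements merged into one kernel-verified Lean document; each statement's English description precedes it below -/
import Mathlib

section
/- Let ∂ : W → W be the boundary map of the Basis II chain complex. Then ∂ ∘ ∂ = 0, the rank of ∂ equals 3, and the kernel of ∂ has dimension 5 over the field with two elements. -/
/-- The basis vectors `X, A, B, C, D, E, F, G` (in this order) of the 8-dimensional
vector space `W = (Fin 8 → ZMod 2)` over the field with two elements. -/
def e (i : Fin 8) : Fin 8 → ZMod 2 := Pi.single i 1

lemma v_indep : LinearIndependent (ZMod 2) ![e 2, e 1 + e 3, e 4 + e 7] := by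
  rw [Fintype.linearIndependent_iff]
  intro g h
  rw [Fin.sum_univ_three] at h
  have h2 := congrFun h 2
  have h1 := congrFun h 1
  have h4 := congrFun h 4
  simp [e, Pi.single_apply] at h2 h1 h4
  intro i
  fin_cases i <;> simpa using ‹_›

/-- The boundary map `∂` of the Basis II chain complex satisfies `∂ ∘ ∂ = 0`, has rank
`3`, and its kernel is `5`-dimensional over the field with two elements. -/
theorem stmt8 (D : (Fin 8 → ZMod 2) →ₗ[ZMod 2] (Fin 8 → ZMod 2))
    (hX : D (e 0) = 0)
    (hA : D (e 1) = e 2)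
    (hB : D (e 2) = 0)
    (hC : D (e 3) = e 2)
    (hD : D (e 4) = e 1 + e 3)
    (hE : D (e 5) = 0)
    (hF : D (e 6) = e 4 + e 7)
    (hG : D (e 7) = e 1 + e 3)
    :
    D ∘ₗ D = 0 ∧
    Module.finrank (ZMod 2) ↥(LinearMap.range D) = 3 ∧
    Module.finrank (ZMod 2) ↥(LinearMap.ker D) = 5 := by
  have hself : ∀ v : Fin 8 → ZMod 2, v + v = 0 := by
    intro v
    rw [← two_smul (ZMod 2), show (2 : ZMod 2) = 0 by decide, zero_smul]
  have hb : ∀ i : Fin 8, (Pi.basisFun (ZMod 2) (Fin 8)) i = e i := by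
    intro i; simp [e, Pi.basisFun_apply]
  have d0 : D (D (e 0)) = 0 := by rw [hX, map_zero]
  have d1 : D (D (e 1)) = 0 := by rw [hA, hB]
  have d2 : D (D (e 2)) = 0 := by rw [hB, map_zero]
  have d3 : D (D (e 3)) = 0 := by rw [hC, hB]
  have d4 : D (D (e 4)) = 0 := by rw [hD, map_add, hA, hC, hself]
  have d5 : D (D (e 5)) = 0 := by rw [hE, map_zero]
  have d6 : D (D (e 6)) = 0 := by rw [hF, map_add, hD, hG, hself]
  have d7 : D (D (e 7)) = 0 := by rw [hG, map_add, hA, hC, hself]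
  have hDD : D ∘ₗ D = 0 := by
    apply (Pi.basisFun (ZMod 2) (Fin 8)).ext
    intro i
    simp only [hb, LinearMap.comp_apply, LinearMap.zero_apply]
    fin_cases i
    · exact d0
    · exact d1
    · exact d2
    · exact d3
    · exact d4
    · exact d5
    · exact d6
    · exact d7
  set S := Submodule.span (ZMod 2) (Set.range ![e 2, e 1 + e 3, e 4 + e 7]) with hS
  have m0 : e 2 ∈ S := Submodule.subset_span ⟨0, rfl⟩
  have m1 : e 1 + e 3 ∈ S := Submodule.subset_span ⟨1, rfl⟩
  have m2 : e 4 + e 7 ∈ S := Submodule.subset_span ⟨2, rfl⟩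
  have s0 : D (e 0) ∈ S := hX ▸ Submodule.zero_mem S
  have s1 : D (e 1) ∈ S := hA ▸ m0
  have s2 : D (e 2) ∈ S := hB ▸ Submodule.zero_mem S
  have s3 : D (e 3) ∈ S := hC ▸ m0
  have s4 : D (e 4) ∈ S := hD ▸ m1
  have s5 : D (e 5) ∈ S := hE ▸ Submodule.zero_mem S
  have s6 : D (e 6) ∈ S := hF ▸ m2
  have s7 : D (e 7) ∈ S := hG ▸ m1
  have hrange : LinearMap.range D = S := by
    apply le_antisymm
    · rintro _ ⟨x, rfl⟩
      have hx : x = ∑ i : Fin 8, x i • e i := by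
        funext j
        simp [e, Pi.single_apply, Finset.sum_apply, eq_comm]
      rw [hx, map_sum]
      refine Submodule.sum_mem _ fun i _ => ?_
      rw [map_smul]
      refine Submodule.smul_mem _ _ ?_
      fin_cases i
      · exact s0
      · exact s1
      · exact s2
      · exact s3
      · exact s4
      · exact s5
      · exact s6
      · exact s7
    · rw [hS, Submodule.span_le]
      rintro _ ⟨i, rfl⟩
      fin_cases i
      · exact ⟨e 1, hA⟩
      · exact ⟨e 4, hD⟩
      · exact ⟨e 6, hF⟩
  have hr : Module.finrank (ZMod 2) ↥(LinearMap.range D) = 3 := by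
    rw [hrange, hS, finrank_span_eq_card v_indep]
    simp
  have htot : Module.finrank (ZMod 2) ↥(LinearMap.range D)
      + Module.finrank (ZMod 2) ↥(LinearMap.ker D) = 8 := by
    have := LinearMap.finrank_range_add_finrank_ker D
    simpa using this
  exact ⟨hDD, hr, by omega⟩
end

section
/- For the Basis II chain complex (W, ∂), the image of ∂ is contained in the kernel of ∂, the quotient ker ∂ / im ∂ has dimension 2 over the field with two elements, and the classes of X and E in ker ∂ / im ∂ form a basis of this quotient; that is, the homology is ℤ₂ ⊕ ℤ₂ generated by [X] and [E]. -/
set_option maxHeartbeats 1000000 in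
set_option synthInstance.maxHeartbeats 400000 in
/-- For the Basis II chain complex `(W, ∂)`: `im ∂ ⊆ ker ∂`, the homology
`ker ∂ / im ∂` is 2-dimensional over `ZMod 2`, and the classes of `X` and `E` form a
basis of it; that is, the homology is `ℤ₂ ⊕ ℤ₂` generated by `[X]` and `[E]`. -/
theorem stmt9 (D : (Fin 8 → ZMod 2) →ₗ[ZMod 2] (Fin 8 → ZMod 2))
    (hX : D (e 0) = 0)
    (hA : D (e 1) = e 2)
    (hB : D (e 2) = 0)
    (hC : D (e 3) = e 2)
    (hD : D (e 4) = e 1 + e 3)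
    (hE : D (e 5) = 0)
    (hF : D (e 6) = e 4 + e 7)
    (hG : D (e 7) = e 1 + e 3)
    :
    LinearMap.range D ≤ LinearMap.ker D ∧
    Module.finrank (ZMod 2)
      (↥(LinearMap.ker D) ⧸
        Submodule.comap (LinearMap.ker D).subtype (LinearMap.range D)) = 2 ∧
    ∀ (hx : e 0 ∈ LinearMap.ker D) (hy : e 5 ∈ LinearMap.ker D),
      LinearIndependent (ZMod 2)
        ![(Submodule.Quotient.mk (⟨e 0, hx⟩ : ↥(LinearMap.ker D)) :
            ↥(LinearMap.ker D) ⧸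
              Submodule.comap (LinearMap.ker D).subtype (LinearMap.range D)),
          Submodule.Quotient.mk (⟨e 5, hy⟩ : ↥(LinearMap.ker D))] ∧
      Submodule.span (ZMod 2)
        {(Submodule.Quotient.mk (⟨e 0, hx⟩ : ↥(LinearMap.ker D)) :
            ↥(LinearMap.ker D) ⧸
              Submodule.comap (LinearMap.ker D).subtype (LinearMap.range D)),
          Submodule.Quotient.mk (⟨e 5, hy⟩ : ↥(LinearMap.ker D))} = ⊤ := by
  have add_self : ∀ x : Fin 8 → ZMod 2, x + x = 0 := by
    intro x; funext j
    have : ∀ a : ZMod 2, a + a = 0 := by decide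
    exact this (x j)
  have he : ∀ i : Fin 8, e i = fun j => if i = j then 1 else 0 := by
    intro i; funext j; simp [e, Pi.single_apply, eq_comm]
  have hDv : ∀ v : Fin 8 → ZMod 2, D v = ∑ i, v i • D (e i) := by
    intro v
    conv_lhs => rw [pi_eq_sum_univ v]
    rw [map_sum]
    refine Finset.sum_congr rfl fun i _ => ?_
    rw [map_smul, he]
  have hDD : ∀ i : Fin 8, D (D (e i)) = 0 := by
    intro i
    fin_cases i <;>
      simp [hX, hA, hB, hC, hD, hE, hF, hG, map_add, add_self]
  have hrange_le : LinearMap.range D ≤ LinearMap.ker D := by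
    rintro _ ⟨v, rfl⟩
    have h : D (D v) = ∑ i, v i • D (D (e i)) := by
      rw [hDv v, map_sum]; simp [map_smul]
    rw [LinearMap.mem_ker, h]
    simp [hDD]
  have hcoord : ∀ w ∈ LinearMap.range D, w 0 = 0 ∧ w 5 = 0 := by
    rintro _ ⟨v, rfl⟩
    rw [hDv v]
    constructor <;>
    · rw [Finset.sum_apply]
      refine Finset.sum_eq_zero fun i _ => ?_
      fin_cases i <;>
        (simp [hX, hA, hB, hC, hD, hE, hF, hG]; try simp [e, Pi.single_apply])
  set v3 : Fin 3 → (Fin 8 → ZMod 2) := ![e 2, e 1 + e 3, e 4 + e 7] with hv3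
  have hrange_eq : LinearMap.range D = Submodule.span (ZMod 2) (Set.range v3) := by
    apply le_antisymm
    · rintro _ ⟨v, rfl⟩
      rw [hDv v]
      refine Submodule.sum_mem _ fun i _ => Submodule.smul_mem _ _ ?_
      fin_cases i
      · show D (e 0) ∈ _; rw [hX]; exact Submodule.zero_mem _
      · show D (e 1) ∈ _; rw [hA]; exact Submodule.subset_span ⟨0, rfl⟩
      · show D (e 2) ∈ _; rw [hB]; exact Submodule.zero_mem _
      · show D (e 3) ∈ _; rw [hC]; exact Submodule.subset_span ⟨0, rfl⟩
      · show D (e 4) ∈ _; rw [hD]; exact Submodule.subset_span ⟨1, rfl⟩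
      · show D (e 5) ∈ _; rw [hE]; exact Submodule.zero_mem _
      · show D (e 6) ∈ _; rw [hF]; exact Submodule.subset_span ⟨2, rfl⟩
      · show D (e 7) ∈ _; rw [hG]; exact Submodule.subset_span ⟨1, rfl⟩
    · rw [Submodule.span_le]
      rintro _ ⟨i, rfl⟩
      fin_cases i
      · exact ⟨e 1, hA⟩
      · exact ⟨e 4, hD⟩
      · exact ⟨e 6, hF⟩
  have hli3 : LinearIndependent (ZMod 2) v3 := by
    rw [Fintype.linearIndependent_iff]
    intro g hg
    rw [Fin.sum_univ_three] at hg
    simp only [hv3, Matrix.cons_val_zero, Matrix.cons_val_one, Matrix.head_cons,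
      Matrix.cons_val_two, Matrix.tail_cons] at hg
    have h1 := congrFun hg 2
    have h2 := congrFun hg 1
    have h3 := congrFun hg 4
    simp [e, Pi.single_apply] at h1 h2 h3
    intro i; fin_cases i <;> simpa
  have hr3 : Module.finrank (ZMod 2) (LinearMap.range D) = 3 := by
    rw [hrange_eq, finrank_span_eq_card hli3]
    rfl
  have hk5 : Module.finrank (ZMod 2) (LinearMap.ker D) = 5 := by
    have h := LinearMap.finrank_range_add_finrank_ker D
    rw [hr3, Module.finrank_fin_fun] at h
    omega
  have hcomap : Module.finrank (ZMod 2)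
      (Submodule.comap (LinearMap.ker D).subtype (LinearMap.range D)) = 3 := by
    rw [(Submodule.comapSubtypeEquivOfLe hrange_le).finrank_eq, hr3]
  have hq2 : Module.finrank (ZMod 2)
      (↥(LinearMap.ker D) ⧸
        Submodule.comap (LinearMap.ker D).subtype (LinearMap.range D)) = 2 := by
    have h := Submodule.finrank_quotient_add_finrank
      (Submodule.comap (LinearMap.ker D).subtype (LinearMap.range D))
    rw [hcomap, hk5] at h
    omega
  refine ⟨hrange_le, hq2, fun hx hy => ?_⟩
  have hli : LinearIndependent (ZMod 2)
      ![(Submodule.Quotient.mk (⟨e 0, hx⟩ : ↥(LinearMap.ker D)) :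
          ↥(LinearMap.ker D) ⧸
            Submodule.comap (LinearMap.ker D).subtype (LinearMap.range D)),
        Submodule.Quotient.mk (⟨e 5, hy⟩ : ↥(LinearMap.ker D))] := by
    rw [Fintype.linearIndependent_iff]
    intro g hg
    rw [Fin.sum_univ_two] at hg
    simp only [Matrix.cons_val_zero, Matrix.cons_val_one, Matrix.head_cons,
      ← Submodule.Quotient.mk_smul, ← Submodule.Quotient.mk_add,
      Submodule.Quotient.mk_eq_zero, Submodule.mem_comap] at hg
    have hmem : (g 0 • e 0 + g 1 • e 5) ∈ LinearMap.range D := by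
      simpa using hg
    obtain ⟨h0, h5⟩ := hcoord _ hmem
    simp [e, Pi.single_apply] at h0 h5
    intro i; fin_cases i <;> assumption
  refine ⟨hli, ?_⟩
  have hcard : Fintype.card (Fin 2) = Module.finrank (ZMod 2)
      (↥(LinearMap.ker D) ⧸
        Submodule.comap (LinearMap.ker D).subtype (LinearMap.range D)) := by
    rw [hq2]; rfl
  have hspan := (basisOfLinearIndependentOfCardEqFinrank hli hcard).span_eq
  rw [coe_basisOfLinearIndependentOfCardEqFinrank] at hspan
  rw [← hspan]
  congr 1
  have : Set.range ![(Submodule.Quotient.mk (⟨e 0, hx⟩ : ↥(LinearMap.ker D)) :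
          ↥(LinearMap.ker D) ⧸
            Submodule.comap (LinearMap.ker D).subtype (LinearMap.range D)),
        Submodule.Quotient.mk (⟨e 5, hy⟩ : ↥(LinearMap.ker D))] =
      {Submodule.Quotient.mk (⟨e 0, hx⟩ : ↥(LinearMap.ker D)),
        Submodule.Quotient.mk (⟨e 5, hy⟩ : ↥(LinearMap.ker D))} := by
    simp [Matrix.range_cons]
    exact Set.pair_comm _ _
  rw [this]
end

section
/- In the Basis II chain complex (W, ∂), the basis vector X lies in the kernel of ∂ but does not lie in the image of ∂; that is, the contact class [X] is a nonzero element of the homology ker ∂ / im ∂. -/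
/-- In the Basis II chain complex `(W, ∂)`, the basis vector `X` lies in `ker ∂` but
not in `im ∂`; equivalently, the contact class `[X]` is a nonzero element of the
homology `ker ∂ / im ∂`. -/
theorem stmt10 (D : (Fin 8 → ZMod 2) →ₗ[ZMod 2] (Fin 8 → ZMod 2))
    (hX : D (e 0) = 0)
    (hA : D (e 1) = e 2)
    (hB : D (e 2) = 0)
    (hC : D (e 3) = e 2)
    (hD : D (e 4) = e 1 + e 3)
    (hE : D (e 5) = 0)
    (hF : D (e 6) = e 4 + e 7)
    (hG : D (e 7) = e 1 + e 3)
    :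
    e 0 ∈ LinearMap.ker D ∧ e 0 ∉ LinearMap.range D ∧
    ∀ (h : e 0 ∈ LinearMap.ker D),
      (Submodule.Quotient.mk (⟨e 0, h⟩ : ↥(LinearMap.ker D)) :
        ↥(LinearMap.ker D) ⧸
          Submodule.comap (LinearMap.ker D).subtype (LinearMap.range D)) ≠ 0 := by
  have key : ∀ v, D v 0 = 0 := by
    intro v
    have hv : v = ∑ i : Fin 8, v i • e i := by
      funext j
      simp [e, Finset.sum_apply, Pi.single_apply]
    rw [hv]
    rw [map_sum]
    simp only [map_smul]
    rw [Fin.sum_univ_eight]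
    simp only [hX, hA, hB, hC, hD, hE, hF, hG]
    simp [e, Pi.single_apply]
  have hnr : e 0 ∉ LinearMap.range D := by
    rintro ⟨v, hv⟩
    have := key v
    rw [hv] at this
    simp [e, Pi.single_apply] at this
  refine ⟨hX, hnr, ?_⟩
  intro h hq
  rw [Submodule.Quotient.mk_eq_zero] at hq
  exact hnr hq
end
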